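/- For any prime p, the group of upper unitriangular n×n matrices over the ring ℤ[1/p] is uniquely p-radicable: for every element g there is a unique element h with h^p = g. -/

import Mathlib

namespace SUaux

variable {n : ℕ} {R : Type*} [CommRing R]

/-- `M` vanishes strictly below the `d`-th superdiagonal. -/
def SU (d : ℕ) (M : Matrix (Fin n) (Fin n) R) : Prop :=
  ∀ i j : Fin n, (j : ℕ) < (i : ℕ) + d → M i j = 0

lemma SU.mono {d e : ℕ} (h : d ≤ e) {M : Matrix (Fin n) (Fin n) R} (hM : SU e M) : SU d M :=
  fun i j hij => hM i j (by omega)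

lemma SU.sub {d : ℕ} {M N : Matrix (Fin n) (Fin n) R} (hM : SU d M) (hN : SU d N) :
    SU d (M - N) := fun i j hij => by
  simp [Matrix.sub_apply, hM i j hij, hN i j hij]

lemma SU.add {d : ℕ} {M N : Matrix (Fin n) (Fin n) R} (hM : SU d M) (hN : SU d N) :
    SU d (M + N) := fun i j hij => by
  simp [Matrix.add_apply, hM i j hij, hN i j hij]

lemma SU.smul {d : ℕ} (r : R) {M : Matrix (Fin n) (Fin n) R} (hM : SU d M) :
    SU d (r • M) := fun i j hij => by
  simp [Matrix.smul_apply, hM i j hij]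

lemma SU.nsmul {d : ℕ} (k : ℕ) {M : Matrix (Fin n) (Fin n) R} (hM : SU d M) :
    SU d (k • M) := fun i j hij => by
  simp [Matrix.smul_apply, hM i j hij]

lemma SU.zero {d : ℕ} : SU d (0 : Matrix (Fin n) (Fin n) R) := fun _ _ _ => rfl

lemma SU.sum {d : ℕ} {ι : Type*} (s : Finset ι) (f : ι → Matrix (Fin n) (Fin n) R)
    (h : ∀ i ∈ s, SU d (f i)) : SU d (∑ i ∈ s, f i) := fun i j hij => by
  rw [Matrix.sum_apply]
  exact Finset.sum_eq_zero fun k hk => h k hk i j hij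

lemma SU.neg_sub {d : ℕ} {M N : Matrix (Fin n) (Fin n) R} (h : SU d (M - N)) :
    SU d (N - M) := fun i j hij => by
  rw [Matrix.sub_apply, sub_eq_zero]
  have := h i j hij
  rw [Matrix.sub_apply, sub_eq_zero] at this
  exact this.symm

lemma SU.mul {d e : ℕ} {M N : Matrix (Fin n) (Fin n) R} (hM : SU d M) (hN : SU e N) :
    SU (d + e) (M * N) := fun i j hij => by
  rw [Matrix.mul_apply]
  refine Finset.sum_eq_zero fun k _ => ?_
  by_cases hk : (k : ℕ) < (i : ℕ) + d
  · rw [hM i k hk, zero_mul]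
  · rw [hN k j (by omega), mul_zero]

lemma SU.pow {M : Matrix (Fin n) (Fin n) R} (hM : SU 1 M) : ∀ k, SU k (M ^ k) := by
  intro k
  induction k with
  | zero =>
    intro i j hij
    have hne : i ≠ j := fun h => by subst h; omega
    rw [pow_zero, Matrix.one_apply_ne hne]
  | succ k ih =>
    rw [pow_succ]
    exact ih.mul hM

lemma SU.eq_zero {M : Matrix (Fin n) (Fin n) R} (hM : SU n M) : M = 0 := by
  ext i j
  exact hM i j (by omega)

lemma SU.pow_sub_pow {M N : Matrix (Fin n) (Fin n) R} (hM : SU 1 M) (hN : SU 1 N)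
    {d : ℕ} (h : SU d (M - N)) : ∀ k, SU (k + d) (M ^ (k + 1) - N ^ (k + 1)) := by
  intro k
  induction k with
  | zero => simpa using h
  | succ k ih =>
    have key : M ^ (k + 2) - N ^ (k + 2)
        = M * (M ^ (k + 1) - N ^ (k + 1)) + (M - N) * N ^ (k + 1) := by
      rw [mul_sub, sub_mul, ← pow_succ', ← pow_succ']
      abel
    rw [key]
    have h1 : SU (1 + (k + d)) (M * (M ^ (k + 1) - N ^ (k + 1))) := hM.mul ih
    have h2 : SU (d + (k + 1)) ((M - N) * N ^ (k + 1)) := h.mul (hN.pow (k + 1))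
    exact (h1.mono (le_of_eq (by omega))).add (h2.mono (le_of_eq (by omega)))

/-- The tail of the binomial expansion of `(1 + B) ^ p`. -/
def Taux (p : ℕ) (B : Matrix (Fin n) (Fin n) R) : Matrix (Fin n) (Fin n) R :=
  ∑ k ∈ Finset.Ico 2 (p + 1), p.choose k • B ^ k

/-- The fixed-point map whose fixed points are the `p`-th roots of `1 + A`. -/
def Faux (p : ℕ) (q : R) (A B : Matrix (Fin n) (Fin n) R) : Matrix (Fin n) (Fin n) R :=
  q • (A - Taux p B)

lemma Taux_su {p : ℕ} {B : Matrix (Fin n) (Fin n) R} (hB : SU 1 B) : SU 1 (Taux p B) := by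
  refine SU.sum _ _ fun k hk => ?_
  have hk2 : 2 ≤ k := (Finset.mem_Ico.mp hk).1
  exact ((hB.pow k).mono (by omega)).nsmul _

lemma Faux_su {p : ℕ} {q : R} {A B : Matrix (Fin n) (Fin n) R} (hA : SU 1 A) (hB : SU 1 B) :
    SU 1 (Faux p q A B) := ((hA.sub (Taux_su hB)).smul q)

lemma Taux_contract {p : ℕ} {B B' : Matrix (Fin n) (Fin n) R} (hB : SU 1 B) (hB' : SU 1 B')
    {d : ℕ} (h : SU d (B - B')) : SU (d + 1) (Taux p B - Taux p B') := by
  rw [Taux, Taux, ← Finset.sum_sub_distrib]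
  refine SU.sum _ _ fun k hk => ?_
  have hk2 : 2 ≤ k := (Finset.mem_Ico.mp hk).1
  rw [← smul_sub]
  refine SU.nsmul _ ?_
  have hps := SU.pow_sub_pow hB hB' h (k - 1)
  have hk1 : k - 1 + 1 = k := by omega
  rw [hk1] at hps
  exact hps.mono (by omega)

lemma Faux_contract {p : ℕ} {q : R} {A B B' : Matrix (Fin n) (Fin n) R}
    (hB : SU 1 B) (hB' : SU 1 B') {d : ℕ} (h : SU d (B - B')) :
    SU (d + 1) (Faux p q A B - Faux p q A B') := by
  rw [Faux, Faux, ← smul_sub]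
  have e : (A - Taux p B) - (A - Taux p B') = Taux p B' - Taux p B := by abel
  rw [e]
  exact ((Taux_contract hB hB' h).neg_sub).smul q

lemma expand_pow {p : ℕ} (hp2 : 2 ≤ p) (B : Matrix (Fin n) (Fin n) R) :
    (1 + B) ^ p = 1 + p • B + Taux p B := by
  have hc : ∀ m, B ^ m * (1 : Matrix (Fin n) (Fin n) R) ^ (p - m) * (p.choose m : Matrix (Fin n) (Fin n) R)
      = p.choose m • B ^ m := by
    intro m
    rw [one_pow, mul_one, ← (Nat.cast_commute (p.choose m) (B ^ m)).eq, ← nsmul_eq_mul]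
  have hsplit : Finset.range (p + 1) = insert 0 (insert 1 (Finset.Ico 2 (p + 1))) := by
    ext k
    simp only [Finset.mem_range, Finset.mem_insert, Finset.mem_Ico]
    omega
  rw [add_comm (1 : Matrix (Fin n) (Fin n) R) B, Commute.add_pow (Commute.one_right B)]
  simp only [hc]
  rw [hsplit, Finset.sum_insert (by simp), Finset.sum_insert (by simp)]
  simp only [Nat.choose_zero_right, pow_zero, one_smul, Nat.choose_one_right, pow_one]
  rw [Taux, add_assoc]

/-- Existence and uniqueness of strictly upper triangular solutions of `(1+B)^p = 1+A`
when `p` is invertible. -/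
lemma key (p : ℕ) (hp2 : 2 ≤ p) (q : R) (hq : (p : R) * q = 1)
    (A : Matrix (Fin n) (Fin n) R) (hA : SU 1 A) :
    ∃! B : Matrix (Fin n) (Fin n) R, SU 1 B ∧ (1 + B) ^ p = 1 + A := by
  have hiff : ∀ B : Matrix (Fin n) (Fin n) R, ((1 + B) ^ p = 1 + A ↔ B = Faux p q A B) := by
    intro B
    rw [expand_pow hp2]
    constructor
    · intro h
      have h1 : p • B + Taux p B = A := by
        have h0 : (1 : Matrix (Fin n) (Fin n) R) + (p • B + Taux p B) = 1 + A := by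
          rw [← add_assoc]; exact h
        exact add_left_cancel h0
      have h2 : p • B = A - Taux p B := eq_sub_of_add_eq h1
      calc B = q • ((p : R) • B) := by rw [smul_smul, mul_comm, hq, one_smul]
        _ = q • (p • B) := by rw [Nat.cast_smul_eq_nsmul]
        _ = Faux p q A B := by rw [h2, Faux]
    · intro h
      have h2 : p • B = A - Taux p B := by
        conv_lhs => rw [h]
        rw [Faux, ← Nat.cast_smul_eq_nsmul R, smul_smul, hq, one_smul]
      rw [h2]
      abel
  have hsu : ∀ m, SU 1 ((Faux p q A)^[m] (0 : Matrix (Fin n) (Fin n) R)) := by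
    intro m
    induction m with
    | zero => rw [Function.iterate_zero_apply]; exact SU.zero
    | succ m ih => rw [Function.iterate_succ_apply']; exact Faux_su hA ih
  have hstep : ∀ m, SU (m + 1)
      ((Faux p q A)^[m + 1] (0 : Matrix (Fin n) (Fin n) R) - (Faux p q A)^[m] 0) := by
    intro m
    induction m with
    | zero =>
      rw [Function.iterate_one, Function.iterate_zero_apply, sub_zero]
      exact Faux_su hA SU.zero
    | succ m ih =>
      have h3 := Faux_contract (p := p) (q := q) (A := A) (hsu (m + 1)) (hsu m) ih
      rwa [← Function.iterate_succ_apply' (Faux p q A) (m + 1) 0,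
        ← Function.iterate_succ_apply' (Faux p q A) m 0] at h3
  have hfix : (Faux p q A)^[n] (0 : Matrix (Fin n) (Fin n) R)
      = Faux p q A ((Faux p q A)^[n] 0) := by
    have h1 : SU n (Faux p q A ((Faux p q A)^[n] (0 : Matrix (Fin n) (Fin n) R))
        - (Faux p q A)^[n] 0) := by
      rw [← Function.iterate_succ_apply' (Faux p q A) n 0]
      exact (hstep n).mono (Nat.le_succ n)
    have h2 := h1.eq_zero
    rw [sub_eq_zero] at h2
    exact h2.symm
  refine ⟨(Faux p q A)^[n] 0, ⟨hsu n, (hiff _).mpr hfix⟩, ?_⟩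
  rintro B' ⟨hB', hB'p⟩
  have hfix' : B' = Faux p q A B' := (hiff _).mp hB'p
  have hall : ∀ d, SU d (B' - (Faux p q A)^[n] 0) := by
    intro d
    induction d with
    | zero => exact (hB'.sub (hsu n)).mono (Nat.zero_le 1)
    | succ d ih =>
      have h3 := Faux_contract (p := p) (q := q) (A := A) hB' (hsu n) ih
      rwa [← hfix', ← hfix] at h3
  rw [← sub_eq_zero]
  exact (hall n).eq_zero

end SUaux

/-- `M` is upper unitriangular: ones on the diagonal and zeros below it. -/
def IsUnitriangular {n : ℕ} {R : Type*} [CommRing R]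
    (M : Matrix (Fin n) (Fin n) R) : Prop :=
  (∀ i, M i i = 1) ∧ ∀ i j : Fin n, j < i → M i j = 0

open SUaux in
/-- The group of upper unitriangular `n × n` matrices over `ℤ[1/p]` is uniquely
`p`-radicable: every unitriangular `g` has a unique unitriangular `p`-th root. -/
theorem unitriangular_zInvP_uniquely_p_radicable (p : ℕ) (hp : p.Prime) (n : ℕ)
    (g : (Matrix (Fin n) (Fin n) (Localization.Away (p : ℤ)))ˣ)
    (hg : IsUnitriangular (g : Matrix (Fin n) (Fin n) (Localization.Away (p : ℤ)))) :
    ∃! h : (Matrix (Fin n) (Fin n) (Localization.Away (p : ℤ)))ˣ,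
      IsUnitriangular (h : Matrix (Fin n) (Fin n) (Localization.Away (p : ℤ))) ∧ h ^ p = g := by
  set R := Localization.Away (p : ℤ) with hR
  have hpu : IsUnit ((p : ℕ) : R) := by
    have h0 : IsUnit (algebraMap ℤ R (p : ℤ)) := IsLocalization.Away.algebraMap_isUnit (p : ℤ)
    rwa [map_natCast] at h0
  obtain ⟨u, hu⟩ := hpu
  have hq : ((p : ℕ) : R) * (↑u⁻¹ : R) = 1 := by rw [← hu]; exact u.mul_inv
  -- translate unitriangularity into the `SU` language
  have htri_su : ∀ M : Matrix (Fin n) (Fin n) R, IsUnitriangular M → SU 1 (M - 1) := by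
    intro M hM i j hij
    rcases eq_or_lt_of_le (Nat.lt_succ_iff.mp hij) with h | h
    · have : i = j := Fin.ext h.symm
      subst this
      rw [Matrix.sub_apply, hM.1 i, Matrix.one_apply_eq, sub_self]
    · have hne : i ≠ j := fun he => by subst he; omega
      rw [Matrix.sub_apply, hM.2 i j (by exact h), Matrix.one_apply_ne hne, sub_zero]
  have hsu_tri : ∀ B : Matrix (Fin n) (Fin n) R, SU 1 B → IsUnitriangular (1 + B) := by
    intro B hB
    constructor
    · intro i
      rw [Matrix.add_apply, Matrix.one_apply_eq, hB i i (Nat.lt_succ_self _), add_zero]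
    · intro i j hij
      have hne : i ≠ j := fun he => by subst he; exact lt_irrefl _ hij
      rw [Matrix.add_apply, Matrix.one_apply_ne hne, hB i j (by omega), add_zero]
  set A : Matrix (Fin n) (Fin n) R := (g : Matrix (Fin n) (Fin n) R) - 1 with hA_def
  have hA : SU 1 A := htri_su _ hg
  obtain ⟨B, ⟨hB, hBp⟩, huniq⟩ := key p hp.two_le (↑u⁻¹ : R) hq A hA
  have hnil : IsNilpotent B := ⟨n, (hB.pow n).eq_zero⟩
  have hBu : IsUnit ((1 : Matrix (Fin n) (Fin n) R) + B) := hnil.isUnit_one_add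
  have hval : (hBu.unit : Matrix (Fin n) (Fin n) R) = 1 + B := hBu.unit_spec
  have hgval : (1 : Matrix (Fin n) (Fin n) R) + A = g := by rw [hA_def]; abel
  refine ⟨hBu.unit, ⟨?_, ?_⟩, ?_⟩
  · rw [hval]
    exact hsu_tri B hB
  · ext1
    rw [Units.val_pow_eq_pow_val, hval, hBp, hgval]
  · rintro h' ⟨htri', hp'⟩
    have hB' : SU 1 ((h' : Matrix (Fin n) (Fin n) R) - 1) := htri_su _ htri'
    have hpow' : (1 + ((h' : Matrix (Fin n) (Fin n) R) - 1)) ^ p = 1 + A := by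
      have e1 : (1 : Matrix (Fin n) (Fin n) R) + ((h' : Matrix (Fin n) (Fin n) R) - 1)
          = (h' : Matrix (Fin n) (Fin n) R) := by abel
      rw [e1, hgval, ← Units.val_pow_eq_pow_val, hp']
    have heq := huniq _ ⟨hB', hpow'⟩
    ext1
    rw [hval, ← heq]
    abel
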